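/- Let n ≥ 1, μ > 0, let P be a real orthogonal n×n matrix, d ∈ ℝ^n, and set X = P·Diag(d)·Pᵀ and Z = P·Diag(φ_μ(d₁),…,φ_μ(d_n))·Pᵀ. Then Z is the unique minimizer of W ↦ ½‖W − X‖_F² − μ log det W over the set of symmetric positive definite n×n matrices W: for every symmetric positive definite W with W ≠ Z, ½‖Z − X‖_F² − μ log det Z < ½‖W − X‖_F² − μ log det W. That is, Prox_{μr}(X) = φ_μ^+(X) where r(W) = −log det W. -/

import Mathlib

open Matrix

/-- The scalar function `φ_μ(t) = (√(t² + 4μ) + t)/2`. -/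
noncomputable def phiMu (μ t : ℝ) : ℝ := (Real.sqrt (t ^ 2 + 4 * μ) + t) / 2

lemma phiMu_pos {μ : ℝ} (hμ : 0 < μ) (t : ℝ) : 0 < phiMu μ t := by
  unfold phiMu
  have h1 : Real.sqrt (t ^ 2) < Real.sqrt (t ^ 2 + 4 * μ) :=
    Real.sqrt_lt_sqrt (by positivity) (by linarith)
  have h2 : Real.sqrt (t ^ 2) = |t| := Real.sqrt_sq_eq_abs t
  nlinarith [abs_nonneg t, neg_abs_le t]

lemma phiMu_mul {μ : ℝ} (hμ : 0 < μ) (t : ℝ) : phiMu μ t * (phiMu μ t - t) = μ := by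
  have h : Real.sqrt (t ^ 2 + 4 * μ) ^ 2 = t ^ 2 + 4 * μ := Real.sq_sqrt (by positivity)
  unfold phiMu
  nlinarith [h]

lemma trace_eq_sum_ev {n : ℕ} (S : Matrix (Fin n) (Fin n) ℝ) (hS : S.IsHermitian) :
    S.trace = ∑ i, hS.eigenvalues i := by
  simpa using hS.trace_eq_sum_eigenvalues

lemma log_det_le {n : ℕ} (S : Matrix (Fin n) (Fin n) ℝ) (hS : S.PosSemidef)
    (hdet : 0 < S.det) : Real.log S.det ≤ S.trace - n := by
  have hH := hS.isHermitian
  have hnn : ∀ i, 0 ≤ hH.eigenvalues i := hS.eigenvalues_nonneg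
  have hdp : S.det = ∏ i, hH.eigenvalues i := by
    simpa using hH.det_eq_prod_eigenvalues
  have hpos : ∀ i, 0 < hH.eigenvalues i := by
    intro i
    rcases lt_or_eq_of_le (hnn i) with h | h
    · exact h
    · exfalso
      rw [hdp, Finset.prod_eq_zero (Finset.mem_univ i) h.symm] at hdet
      exact lt_irrefl 0 hdet
  rw [hdp, Real.log_prod (fun i _ => (hpos i).ne'), trace_eq_sum_ev S hH]
  calc ∑ i, Real.log (hH.eigenvalues i) ≤ ∑ i, (hH.eigenvalues i - 1) :=
        Finset.sum_le_sum fun i _ => Real.log_le_sub_one_of_pos (hpos i)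
    _ = (∑ i, hH.eigenvalues i) - n := by rw [Finset.sum_sub_distrib]; simp


/-- `Prox_{μr}(X) = φ_μ^+(X)` where `r(W) = −log det W`.
For `μ > 0`, `P` orthogonal, `X = P Diag(d) Pᵀ` and `Z = P Diag(φ_μ(d)) Pᵀ`, the matrix
`Z` is the unique minimizer of `W ↦ ½‖W − X‖_F² − μ log det W` over symmetric positive
definite matrices. -/
theorem prox_log_det_is_phi (n : ℕ) (hn : 1 ≤ n) (μ : ℝ) (hμ : 0 < μ)
    (P : Matrix (Fin n) (Fin n) ℝ) (hP : Pᵀ * P = 1) (d : Fin n → ℝ)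
    (X Z : Matrix (Fin n) (Fin n) ℝ)
    (hX : X = P * Matrix.diagonal d * Pᵀ)
    (hZ : Z = P * Matrix.diagonal (fun i => phiMu μ (d i)) * Pᵀ) :
    ∀ W : Matrix (Fin n) (Fin n) ℝ, W.PosDef → W ≠ Z →
      (1 / 2) * ∑ i : Fin n, ∑ j : Fin n, (Z i j - X i j) ^ 2 - μ * Real.log Z.det
        < (1 / 2) * ∑ i : Fin n, ∑ j : Fin n, (W i j - X i j) ^ 2 - μ * Real.log W.det := by
  intro W hW hWZ
  set φ : Fin n → ℝ := fun i => phiMu μ (d i) with hφdef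
  have hφpos : ∀ i, 0 < φ i := fun i => phiMu_pos hμ (d i)
  have hφmul : ∀ i, φ i * (φ i - d i) = μ := fun i => phiMu_mul hμ (d i)
  have hPPt : P * Pᵀ = 1 := mul_eq_one_comm.mp hP
  -- sandwich multiplication
  have sand : ∀ f g : Fin n → ℝ,
      (P * diagonal f * Pᵀ) * (P * diagonal g * Pᵀ)
        = P * diagonal (fun i => f i * g i) * Pᵀ := by
    intro f g
    calc (P * diagonal f * Pᵀ) * (P * diagonal g * Pᵀ)
        = P * (diagonal f * ((Pᵀ * P) * (diagonal g * Pᵀ))) := by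
          simp only [Matrix.mul_assoc]
      _ = P * diagonal (fun i => f i * g i) * Pᵀ := by
          rw [hP, one_mul, ← Matrix.mul_assoc (diagonal f) (diagonal g) Pᵀ,
            diagonal_mul_diagonal, ← Matrix.mul_assoc]
  have sand_one : ∀ f : Fin n → ℝ, (∀ i, f i = 1) → P * diagonal f * Pᵀ = 1 := by
    intro f hf
    rw [show f = fun _ => (1:ℝ) from funext hf, diagonal_one, mul_one, hPPt]
  have hdetP : P.det * P.det = 1 := by
    have := congrArg Matrix.det hP
    simpa [Matrix.det_mul, Matrix.det_transpose] using this
  have hdet_sand : ∀ f : Fin n → ℝ, (P * diagonal f * Pᵀ).det = ∏ i, f i := by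
    intro f
    rw [Matrix.det_mul, Matrix.det_mul, Matrix.det_transpose, Matrix.det_diagonal]
    linear_combination (∏ i, f i) * hdetP
  -- Y = Z⁻¹
  set Y : Matrix (Fin n) (Fin n) ℝ := P * diagonal (fun i => (φ i)⁻¹) * Pᵀ with hYdef
  have hZY : Z * Y = 1 := by
    rw [hZ, hYdef, sand]
    exact sand_one _ fun i => mul_inv_cancel₀ (hφpos i).ne'
  have hYZ : Y * Z = 1 := mul_eq_one_comm.mp hZY
  have hYsymm : Yᵀ = Y := by
    rw [hYdef]
    simp [Matrix.transpose_mul, Matrix.diagonal_transpose, Matrix.mul_assoc]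
  -- Q = Z^{-1/2}
  set q : Fin n → ℝ := fun i => Real.sqrt (φ i)⁻¹ with hqdef
  have hq : ∀ i, q i * q i = (φ i)⁻¹ := fun i =>
    Real.mul_self_sqrt (inv_nonneg.mpr (hφpos i).le)
  set Q : Matrix (Fin n) (Fin n) ℝ := P * diagonal q * Pᵀ with hQdef
  have hQQ : Q * Q = Y := by
    rw [hQdef, sand, hYdef, show (fun i => q i * q i) = fun i => (φ i)⁻¹ from funext hq]
  have hQsymm : Qᵀ = Q := by
    rw [hQdef]
    simp [Matrix.transpose_mul, Matrix.diagonal_transpose, Matrix.mul_assoc]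
  have hQH : Qᴴ = Q := by
    rw [Matrix.conjTranspose_eq_transpose_of_trivial, hQsymm]
  -- determinants
  have hdetZ : Z.det = ∏ i, φ i := by rw [hZ]; exact hdet_sand _
  have hdetZpos : 0 < Z.det := by
    rw [hdetZ]; exact Finset.prod_pos fun i _ => hφpos i
  have hdetW : 0 < W.det := hW.det_pos
  have hdetYZ : Y.det * Z.det = 1 := by
    rw [← Matrix.det_mul, hYZ, Matrix.det_one]
  have hdetY : Y.det = (Z.det)⁻¹ := eq_inv_of_mul_eq_one_left hdetYZ
  -- S = Q W Q
  set S : Matrix (Fin n) (Fin n) ℝ := Q * W * Q with hSdef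
  have hSpsd : S.PosSemidef := by
    have := hW.posSemidef.mul_mul_conjTranspose_same Q
    rwa [hQH] at this
  have hdetQ2 : Q.det * Q.det = Y.det := by rw [← Matrix.det_mul, hQQ]
  have hdetS : S.det = W.det * Y.det := by
    rw [hSdef, Matrix.det_mul, Matrix.det_mul, ← hdetQ2]
    ring
  have hdetSpos : 0 < S.det := by
    rw [hdetS, hdetY]
    positivity
  have htrS : S.trace = (Y * W).trace := by
    rw [hSdef, Matrix.trace_mul_comm, ← Matrix.mul_assoc, hQQ]
  -- log-det inequality
  have hlog : Real.log W.det - Real.log Z.det ≤ (Y * W).trace - n := by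
    have h1 := log_det_le S hSpsd hdetSpos
    rw [htrS] at h1
    have h2 : Real.log S.det = Real.log W.det - Real.log Z.det := by
      rw [hdetS, hdetY, Real.log_mul hdetW.ne' (inv_ne_zero hdetZpos.ne'),
        Real.log_inv]
      ring
    linarith
  -- Z - X = μ • Y
  have hZX : Z - X = μ • Y := by
    rw [hZ, hX, hYdef]
    calc P * diagonal φ * Pᵀ - P * diagonal d * Pᵀ
        = P * (diagonal φ - diagonal d) * Pᵀ := by
          rw [← Matrix.sub_mul, ← Matrix.mul_sub]
      _ = P * (μ • diagonal fun i => (φ i)⁻¹) * Pᵀ := by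
          rw [Matrix.diagonal_sub, ← Matrix.diagonal_smul]
          congr 1
          congr 1
          congr 1
          funext i
          simp only [Pi.smul_apply, smul_eq_mul]
          have h := hφmul i
          have hne := (hφpos i).ne'
          field_simp
          nlinarith [h]
      _ = μ • (P * (diagonal fun i => (φ i)⁻¹) * Pᵀ) := by
          rw [Matrix.mul_smul, Matrix.smul_mul]
  have hZXe : ∀ i j, Z i j - X i j = μ * Y i j := by
    intro i j
    have := congrFun (congrFun hZX i) j
    simpa [Matrix.sub_apply, Matrix.smul_apply, smul_eq_mul] using this
  have hYs : ∀ i j, Y i j = Y j i := by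
    intro i j
    conv_lhs => rw [← hYsymm]
    rw [Matrix.transpose_apply]
  -- cross-term equals μ (tr(YW) - n)
  have hsum : ∑ i, ∑ j, (Z i j - X i j) * (W i j - Z i j)
      = μ * ((Y * W).trace - n) := by
    have step1 : ∑ i, ∑ j, (Z i j - X i j) * (W i j - Z i j)
        = μ * ∑ i, ∑ j, Y i j * (W i j - Z i j) := by
      rw [Finset.mul_sum]
      refine Finset.sum_congr rfl fun i _ => ?_
      rw [Finset.mul_sum]
      refine Finset.sum_congr rfl fun j _ => ?_
      rw [hZXe i j]; ring
    have step2 : ∑ i, ∑ j, Y i j * (W i j - Z i j) = (Y * (W - Z)).trace := by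
      rw [Matrix.trace]
      simp only [Matrix.diag_apply, Matrix.mul_apply, Matrix.sub_apply]
      rw [Finset.sum_comm]
      refine Finset.sum_congr rfl fun j _ => Finset.sum_congr rfl fun i _ => ?_
      rw [hYs i j]
    have step3 : (Y * (W - Z)).trace = (Y * W).trace - n := by
      rw [Matrix.mul_sub, Matrix.trace_sub, hYZ, Matrix.trace_one]
      simp
    rw [step1, step2, step3]
  -- quadratic expansion
  have hquad : ∑ i, ∑ j, (W i j - X i j) ^ 2
      = ∑ i, ∑ j, (Z i j - X i j) ^ 2
        + 2 * (∑ i, ∑ j, (Z i j - X i j) * (W i j - Z i j))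
        + ∑ i, ∑ j, (W i j - Z i j) ^ 2 := by
    have h : ∀ i j : Fin n, (W i j - X i j) ^ 2
        = (Z i j - X i j) ^ 2 + 2 * ((Z i j - X i j) * (W i j - Z i j))
          + (W i j - Z i j) ^ 2 := fun i j => by ring
    simp_rw [h, Finset.sum_add_distrib, Finset.mul_sum]
  -- positivity of ‖W - Z‖²
  have hC : 0 < ∑ i, ∑ j, (W i j - Z i j) ^ 2 := by
    obtain ⟨i, hi⟩ : ∃ i, W i ≠ Z i := by
      by_contra h; push_neg at h; exact hWZ (funext h)
    obtain ⟨j, hj⟩ : ∃ j, W i j ≠ Z i j := by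
      by_contra h; push_neg at h; exact hi (funext h)
    refine Finset.sum_pos' (fun i _ => Finset.sum_nonneg fun j _ => sq_nonneg _)
      ⟨i, Finset.mem_univ i, Finset.sum_pos' (fun j _ => sq_nonneg _)
        ⟨j, Finset.mem_univ j, sq_pos_of_ne_zero (sub_ne_zero.mpr hj)⟩⟩
  have hmul : μ * (Real.log W.det - Real.log Z.det) ≤ μ * ((Y * W).trace - n) :=
    mul_le_mul_of_nonneg_left hlog hμ.le
  nlinarith [hsum, hquad, hC, hmul]
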